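/- Let A be a complex C*-algebra, I a set, and a, b : I → A such that the families i ↦ (a i)*(a i) and i ↦ (b i)*(b i) both have unconditional sums in A. Then the family i ↦ (a i + b i)*(a i + b i) has an unconditional sum, and ∑_{i∈I} (a i + b i)*(a i + b i) = ∑_{i∈I} (a i)*(a i) + ∑_{i∈I} (a i)*(b i) + ∑_{i∈I} (b i)*(a i) + ∑_{i∈I} (b i)*(b i), where all four sums on the right exist unconditionally. -/

import Mathlib

open scoped InnerProductSpace WithCStarModule

/-- Finite Cauchy–Schwarz in a C*-algebra. -/
lemma cstar_finset_cauchy_schwarz {A : Type*} [CStarAlgebra A]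
    {ι : Type*} [Fintype ι] (a b : ι → A) :
    ‖∑ i, star (a i) * b i‖ ≤
      Real.sqrt ‖∑ i, star (a i) * a i‖ * Real.sqrt ‖∑ i, star (b i) * b i‖ := by
  letI := CStarAlgebra.spectralOrder A
  letI := CStarAlgebra.spectralOrderedRing A
  let x : C⋆ᵐᵒᵈ(A, ι → A) := (WithCStarModule.equiv A (ι → A)).symm (fun i => star (b i))
  let y : C⋆ᵐᵒᵈ(A, ι → A) := (WithCStarModule.equiv A (ι → A)).symm (fun i => star (a i))
  have h := CStarModule.norm_inner_le (A := A) (E := C⋆ᵐᵒᵈ(A, ι → A)) (x := x) (y := y)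
  have hinner : ⟪x, y⟫_A = ∑ i, star (a i) * b i := by
    rw [WithCStarModule.pi_inner]
    simp only [WithCStarModule.inner_def]
    show ∑ i, star (a i) * star (star (b i)) = _
    simp
  have hx : ‖y‖ = Real.sqrt ‖∑ i, star (a i) * a i‖ := by
    rw [WithCStarModule.pi_norm]
    simp only [WithCStarModule.inner_def]
    show √‖∑ i, star (a i) * star (star (a i))‖ = _
    simp
  have hy : ‖x‖ = Real.sqrt ‖∑ i, star (b i) * b i‖ := by
    rw [WithCStarModule.pi_norm]
    simp only [WithCStarModule.inner_def]
    show √‖∑ i, star (b i) * star (star (b i))‖ = _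
    simp
  rw [hinner, hx, hy] at h
  exact h.trans_eq (mul_comm _ _)

/-- Cross-term summability. -/
lemma summable_star_mul {A : Type*} [CStarAlgebra A]
    {I : Type*} (a b : I → A)
    (ha : Summable fun i => star (a i) * a i)
    (hb : Summable fun i => star (b i) * b i) :
    Summable fun i => star (a i) * b i := by
  classical
  rw [summable_iff_vanishing]
  intro e he
  rcases Metric.mem_nhds_iff.mp he with ⟨ε, hε, hball⟩
  set δ : ℝ := min ε 1 with hδ
  have hδ0 : 0 < δ := lt_min hε one_pos
  obtain ⟨s₁, hs₁⟩ := ha.vanishing (Metric.ball_mem_nhds 0 (by positivity : (0:ℝ) < δ ^ 2))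
  obtain ⟨s₂, hs₂⟩ := hb.vanishing (Metric.ball_mem_nhds 0 (by positivity : (0:ℝ) < δ ^ 2))
  refine ⟨s₁ ∪ s₂, fun t ht => ?_⟩
  have ht₁ := hs₁ t (ht.mono_right Finset.subset_union_left)
  have ht₂ := hs₂ t (ht.mono_right Finset.subset_union_right)
  simp only [Metric.mem_ball, dist_zero_right] at ht₁ ht₂
  apply hball
  simp only [Metric.mem_ball, dist_zero_right]
  have key : ‖∑ i ∈ t, star (a i) * b i‖ ≤
      Real.sqrt ‖∑ i ∈ t, star (a i) * a i‖ * Real.sqrt ‖∑ i ∈ t, star (b i) * b i‖ := by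
    have := cstar_finset_cauchy_schwarz (fun i : t => a i) (fun i : t => b i)
    rwa [Finset.sum_coe_sort t (fun i => star (a i) * b i),
      Finset.sum_coe_sort t (fun i => star (a i) * a i),
      Finset.sum_coe_sort t (fun i => star (b i) * b i)] at this
  have h1 : Real.sqrt ‖∑ i ∈ t, star (a i) * a i‖ < δ := by
    rw [show δ = Real.sqrt (δ ^ 2) by rw [Real.sqrt_sq hδ0.le]]
    exact Real.sqrt_lt_sqrt (norm_nonneg _) ht₁
  have h2 : Real.sqrt ‖∑ i ∈ t, star (b i) * b i‖ < δ := by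
    rw [show δ = Real.sqrt (δ ^ 2) by rw [Real.sqrt_sq hδ0.le]]
    exact Real.sqrt_lt_sqrt (norm_nonneg _) ht₂
  calc ‖∑ i ∈ t, star (a i) * b i‖ ≤ _ := key
    _ < δ * δ := by
        apply mul_lt_mul' h1.le h2 (Real.sqrt_nonneg _) hδ0
    _ ≤ 1 * ε := by
        apply mul_le_mul (min_le_right _ _) (min_le_left _ _) hδ0.le zero_le_one
    _ = ε := one_mul ε

/-- If `∑ (a i)* (a i)` and `∑ (b i)* (b i)` converge unconditionally in a complex
C*-algebra, then so do the cross terms and `∑ (a i + b i)* (a i + b i)`, and the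
latter is the sum of the four terms. -/
theorem hasSum_add_sq_of_hasSum_sq {A : Type*} [CStarAlgebra A]
    {I : Type*} (a b : I → A) (Sa Sb : A)
    (ha : HasSum (fun i => star (a i) * a i) Sa)
    (hb : HasSum (fun i => star (b i) * b i) Sb) :
    ∃ Sab Sba Ssum : A,
      HasSum (fun i => star (a i) * b i) Sab ∧
      HasSum (fun i => star (b i) * a i) Sba ∧
      HasSum (fun i => star (a i + b i) * (a i + b i)) Ssum ∧
      Ssum = Sa + Sab + Sba + Sb := by
  have hab : Summable fun i => star (a i) * b i :=
    summable_star_mul a b ha.summable hb.summable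
  have hba : Summable fun i => star (b i) * a i :=
    summable_star_mul b a hb.summable ha.summable
  refine ⟨∑' i, star (a i) * b i, ∑' i, star (b i) * a i, _,
    hab.hasSum, hba.hasSum, ?_, rfl⟩
  have := ((ha.add hab.hasSum).add hba.hasSum).add hb
  convert this using 1
  funext i
  simp only [star_add, add_mul, mul_add]
  abel
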